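/- In the standing setup, for every k ∈ ℤ one has ⟨a_k, σ_1⟩ = (1/32)(31λ − 1). -/

import Mathlib

/-- The `l`-eigenspace of the adjoint map `x ↦ a * x` of an element `a` of a commutative
nonassociative algebra. -/
def eig (k : Type*) {A : Type*} [Field k] [NonUnitalNonAssocCommRing A]
    [Module k A] [SMulCommClass k A A] [IsScalarTower k A A] (a : A) (l : k) :
    Submodule k A :=
  Module.End.eigenspace (LinearMap.mul k A a) l

/-- `a` is a `V(4,3)`-axis: an idempotent which is semisimple with spectrum in
`{1, 0, 1/4, 1/32}`, primitive, and whose eigenspaces satisfy the Ising fusion rules. -/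
def IsV43Axis (k : Type*) {A : Type*} [Field k] [NonUnitalNonAssocCommRing A]
    [Module k A] [SMulCommClass k A A] [IsScalarTower k A A] (a : A) : Prop :=
  a * a = a ∧
  (eig k a 1 ⊔ eig k a 0 ⊔ eig k a (1/4) ⊔ eig k a (1/32)) = ⊤ ∧
  eig k a 1 = Submodule.span k ({a} : Set A) ∧
  (∀ x ∈ eig k a 0, ∀ y ∈ eig k a 0, x * y ∈ eig k a 0) ∧
  (∀ x ∈ eig k a 0, ∀ y ∈ eig k a (1/4), x * y ∈ eig k a (1/4)) ∧
  (∀ x ∈ eig k a 0, ∀ y ∈ eig k a (1/32), x * y ∈ eig k a (1/32)) ∧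
  (∀ x ∈ eig k a (1/4), ∀ y ∈ eig k a (1/4), x * y ∈ eig k a 1 ⊔ eig k a 0) ∧
  (∀ x ∈ eig k a (1/4), ∀ y ∈ eig k a (1/32), x * y ∈ eig k a (1/32)) ∧
  (∀ x ∈ eig k a (1/32), ∀ y ∈ eig k a (1/32),
      x * y ∈ eig k a 1 ⊔ eig k a 0 ⊔ eig k a (1/4))

/-- The doubly infinite sequence of axes `a_j`, `j ∈ ℤ`, with `a_{2i} = ρ^i(a_0)` and
`a_{2i+1} = ρ^i(a_1)`, where `ρ = τ1 ∘ τ0`. -/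
def aSeq {k : Type*} {A : Type*} [Field k] [NonUnitalNonAssocCommRing A]
    [Module k A] [SMulCommClass k A A] [IsScalarTower k A A]
    (τ0 τ1 : A ≃ₗ[k] A) (a0 a1 : A) (j : ℤ) : A :=
  if Even j then ((τ0.trans τ1) ^ (j / 2)) a0 else ((τ0.trans τ1) ^ ((j - 1) / 2)) a1

section Aux

variable {k : Type*} [Field k] {A : Type*} [NonUnitalNonAssocCommRing A]
    [Module k A] [SMulCommClass k A A] [IsScalarTower k A A]

lemma mem_eig_iff {a x : A} {l : k} : x ∈ eig k a l ↔ a * x = l • x := by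
  rw [eig, Module.End.mem_eigenspace_iff, LinearMap.mul_apply']

lemma tau_fix (b c : A) (hb : b * b = b)
    (hsum : (eig k b 1 ⊔ eig k b 0 ⊔ eig k b (1/4) ⊔ eig k b (1/32)) = (⊤ : Submodule k A))
    (τ : A ≃ₗ[k] A)
    (hτp : ∀ x ∈ eig k b 1 ⊔ eig k b 0 ⊔ eig k b (1/4), τ x = x)
    (hτm : ∀ x ∈ eig k b (1/32), τ x = -x)
    (hτmul : ∀ x y : A, τ (x * y) = τ x * τ y) :
    τ (b * c - (1/32 : k) • (b + c)) = b * c - (1/32 : k) • (b + c) := by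
  have hc : c ∈ eig k b 1 ⊔ eig k b 0 ⊔ eig k b (1/4) ⊔ eig k b (1/32) := by
    rw [hsum]; exact Submodule.mem_top
  obtain ⟨p, hp, u, hu, hpu⟩ := Submodule.mem_sup.mp hc
  have hbmem : b ∈ eig k b 1 ⊔ eig k b 0 ⊔ eig k b (1/4) :=
    Submodule.mem_sup_left (Submodule.mem_sup_left (mem_eig_iff.mpr (by rw [hb, one_smul])))
  have hbu : b * u = (1/32 : k) • u := mem_eig_iff.mp hu
  have hτb : τ b = b := hτp b hbmem
  have hτp' : τ p = p := hτp p hp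
  have hτu : τ u = -u := hτm u hu
  subst hpu
  rw [map_sub, hτmul, map_smul]
  simp only [map_add, hτb, hτp', hτu, mul_add, mul_neg, hbu]
  module

end Aux

theorem form_with_sigma1
    {k : Type*} [Field k] [CharZero k] {A : Type*} [NonUnitalNonAssocCommRing A]
    [Module k A] [SMulCommClass k A A] [IsScalarTower k A A]
    (B : LinearMap.BilinForm k A)
    (hsymm : ∀ x y : A, B x y = B y x)
    (hassoc : ∀ x y z : A, B (x * y) z = B x (y * z))
    (a0 a1 : A) (ha0 : IsV43Axis k a0) (ha1 : IsV43Axis k a1)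
    (hn0 : B a0 a0 = 1) (hn1 : B a1 a1 = 1)
    (τ0 τ1 : A ≃ₗ[k] A)
    (hτ0p : ∀ x ∈ eig k a0 1 ⊔ eig k a0 0 ⊔ eig k a0 (1/4), τ0 x = x)
    (hτ0m : ∀ x ∈ eig k a0 (1/32), τ0 x = -x)
    (hτ1p : ∀ x ∈ eig k a1 1 ⊔ eig k a1 0 ⊔ eig k a1 (1/4), τ1 x = x)
    (hτ1m : ∀ x ∈ eig k a1 (1/32), τ1 x = -x)
    (hτ0mul : ∀ x y : A, τ0 (x * y) = τ0 x * τ0 y)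
    (hτ1mul : ∀ x y : A, τ1 (x * y) = τ1 x * τ1 y)
    (hτ0B : ∀ x y : A, B (τ0 x) (τ0 y) = B x y)
    (hτ1B : ∀ x y : A, B (τ1 x) (τ1 y) = B x y)
    (a : ℤ → A) (ha : a = aSeq τ0 τ1 a0 a1)
    (lm mu : k) (hlm : lm = B a0 a1) (hmu : mu = B a0 (a 2))
    (σ1 σ2e σ2o : A)
    (hσ1 : σ1 = a0 * a1 - (1/32 : k) • (a0 + a1))
    (hσ2e : σ2e = a0 * a 2 - (1/32 : k) • (a0 + a 2))
    (hσ2o : σ2o = a (-1) * a1 - (1/32 : k) • (a (-1) + a1)) :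
    ∀ j : ℤ, B (a j) σ1 = (1/32 : k) * (31 * lm - 1) := by
  set ρ : A ≃ₗ[k] A := τ0.trans τ1 with hρ
  have hfix0 : τ0 σ1 = σ1 := by
    rw [hσ1]; exact tau_fix a0 a1 ha0.1 ha0.2.1 τ0 hτ0p hτ0m hτ0mul
  have hfix1 : τ1 σ1 = σ1 := by
    have hσ1' : σ1 = a1 * a0 - (1/32 : k) • (a1 + a0) := by
      rw [hσ1, mul_comm, add_comm]
    rw [hσ1']; exact tau_fix a1 a0 ha1.1 ha1.2.1 τ1 hτ1p hτ1m hτ1mul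
  have hρfix : ρ σ1 = σ1 := by
    rw [hρ, LinearEquiv.trans_apply, hfix0, hfix1]
  have hρB : ∀ x y : A, B (ρ x) (ρ y) = B x y := fun x y => by
    rw [hρ, LinearEquiv.trans_apply, LinearEquiv.trans_apply, hτ1B, hτ0B]
  have hρstep : ∀ x : A, B (ρ x) σ1 = B x σ1 := fun x => by
    conv_lhs => rw [← hρfix]
    exact hρB x σ1
  have hρinv : ∀ x : A, B (ρ⁻¹ x) σ1 = B x σ1 := fun x => by
    have : B (ρ (ρ⁻¹ x)) σ1 = B (ρ⁻¹ x) σ1 := hρstep _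
    have h2 : ρ (ρ⁻¹ x) = x := ρ.apply_symm_apply x
    rw [h2] at this; exact this.symm
  have key : ∀ m : ℤ, ∀ x : A, B ((ρ ^ m) x) σ1 = B x σ1 := by
    intro m
    induction m using Int.induction_on with
    | zero => intro x; simp
    | succ n ih =>
        intro x
        have h : (ρ ^ ((n : ℤ) + 1)) x = (ρ ^ (n : ℤ)) (ρ x) := by
          rw [zpow_add_one]; rfl
        rw [h, ih, hρstep]
    | pred n ih =>
        intro x
        have h : (ρ ^ (-(n : ℤ) - 1)) x = (ρ ^ (-(n : ℤ))) (ρ⁻¹ x) := by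
          rw [zpow_sub_one]; rfl
        rw [h, ih, hρinv]
  have hB0 : B a0 σ1 = (1/32 : k) * (31 * lm - 1) := by
    have h1 : B a0 (a0 * a1) = B a0 a1 := by rw [← hassoc, ha0.1]
    rw [hσ1]
    simp only [map_sub, map_smul, map_add, smul_eq_mul]
    rw [h1, hn0, ← hlm]; ring
  have hB1 : B a1 σ1 = (1/32 : k) * (31 * lm - 1) := by
    have h1 : B a1 (a0 * a1) = B a0 a1 := by rw [hsymm, hassoc, ha1.1]
    rw [hσ1]
    simp only [map_sub, map_smul, map_add, smul_eq_mul]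
    rw [h1, hsymm a1 a0, ← hlm, hn1]; ring
  intro j
  rw [ha]
  unfold aSeq
  by_cases hj : Even j
  · rw [if_pos hj, ← hρ, key, hB0]
  · rw [if_neg hj, ← hρ, key, hB1]
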